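/- Let E be a Euclidean space, α and β nonzero vectors with ⟨α,β⟩ < 0, and n, m ≥ 0 real numbers (with ⟨α∨,β⟩ an integer, coming from a root system). Let r be the reflection r(x) = x − (⟨x,α⟩ − n)α∨. Then the image r(H_{β,m}) equals H_{β − ⟨α∨,β⟩α, t} with t = m − ⟨α∨,β⟩n ≥ 0, and for any v with ⟨α,v⟩ > n and ⟨β,v⟩ > m we have ⟨β − ⟨α∨,β⟩α, r(v)⟩ > t. In particular, if t > 0 then the hyperplane r(H_{β,m}) separates r(v) from the origin. -/
import Mathlib


open scoped RealInnerProductSpace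

theorem reflected_hyperplane_separates {E : Type*} [NormedAddCommGroup E]
    [InnerProductSpace ℝ E] (α β : E) (hα : α ≠ 0) (hβ : β ≠ 0)
    (hab : ⟪α, β⟫ < 0) (n m : ℝ) (hn : 0 ≤ n) (hm : 0 ≤ m)
    (hint : ∃ z : ℤ, ⟪(2 / ⟪α, α⟫) • α, β⟫ = (z : ℝ)) :
    let αv : E := (2 / ⟪α, α⟫) • α
    let r : E → E := fun x => x - (⟪x, α⟫ - n) • αv
    let δ : E := β - ⟪αv, β⟫ • α
    let t : ℝ := m - ⟪αv, β⟫ * n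
    r '' {x | ⟪x, β⟫ = m} = {x | ⟪x, δ⟫ = t} ∧ 0 ≤ t ∧
      ∀ v : E, ⟪α, v⟫ > n → ⟪β, v⟫ > m → ⟪δ, r v⟫ > t := by
  intro αv r δ t
  have hαα_pos : (0:ℝ) < ⟪α, α⟫ :=
    lt_of_le_of_ne real_inner_self_nonneg
      (fun h => hα (real_inner_self_nonpos.mp (le_of_eq h.symm)))
  have hαα : ⟪α, α⟫ ≠ 0 := ne_of_gt hαα_pos
  have hcval : ⟪αv, β⟫ = 2 / ⟪α, α⟫ * ⟪α, β⟫ := by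
    simp [αv, real_inner_smul_left]
  have hc0 : ⟪αv, β⟫ < 0 := by
    rw [hcval]
    exact mul_neg_of_pos_of_neg (by positivity) hab
  have hava : ⟪αv, α⟫ = 2 := by
    rw [show (⟪αv, α⟫ : ℝ) = 2 / ⟪α, α⟫ * ⟪α, α⟫ from real_inner_smul_left _ _ _]
    field_simp
  have key : ∀ x : E, ⟪r x, δ⟫ = ⟪x, β⟫ - ⟪αv, β⟫ * n := by
    intro x
    simp only [r, δ, inner_sub_left, inner_sub_right, real_inner_smul_left,
      real_inner_smul_right, hava]
    ring
  have keyrβ : ∀ x : E, ⟪r x, β⟫ = ⟪x, β⟫ - (⟪x, α⟫ - n) * ⟪αv, β⟫ := by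
    intro x
    simp only [r, inner_sub_left, real_inner_smul_left]
  refine ⟨?_, ?_, ?_⟩
  · ext x
    constructor
    · rintro ⟨y, hy, rfl⟩
      simp only [Set.mem_setOf_eq] at hy ⊢
      rw [key y, hy]
    · intro hx
      simp only [Set.mem_setOf_eq] at hx
      refine ⟨r x, ?_, ?_⟩
      · simp only [Set.mem_setOf_eq, keyrβ x]
        have hxδ : ⟪x, β⟫ - ⟪αv, β⟫ * ⟪x, α⟫ = m - ⟪αv, β⟫ * n := by
          simpa [δ, t, inner_sub_right, real_inner_smul_right] using hx
        linarith [hxδ]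
      · -- r (r x) = x
        show r x - (⟪r x, α⟫ - n) • αv = x
        have hrxα : ⟪r x, α⟫ = 2 * n - ⟪x, α⟫ := by
          simp only [r, inner_sub_left, real_inner_smul_left, hava]
          ring
        simp only [r, hrxα]
        rw [show (2 * n - ⟪x, α⟫ - n) = -(⟪x, α⟫ - n) by ring, neg_smul]
        abel
  · have : 0 ≤ -(⟪αv, β⟫ * n) := by nlinarith
    simp only [t]; linarith
  · intro v hv1 hv2
    have := key v
    rw [real_inner_comm]
    have hvb : ⟪v, β⟫ > m := by rwa [real_inner_comm] at hv2
    simp only [t]; linarith
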